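/- (Fano-type lower bound with averaged KL divergences.) Let Θ = {1, ..., r} with r ≥ 3 and prior π, let (Y, 𝒜, μ) be a measure space, and for each i ∈ Θ let p(·|i) be a probability density with respect to μ. Then for every measurable estimator θ̂ : Y → Θ, the probability of error satisfies Pr(θ̂(y) ≠ θ) ≥ (1 / log(r − 1)) · [ log r − (1/r²) Σ_{i,j ∈ Θ} D_KL( p(·|i) ‖ p(·|j) ) − log 2 ], where D_KL(p ‖ q) = ∫_Y p(y) log( p(y)/q(y) ) μ(dy). -/

import Mathlib

open MeasureTheory Real Finset

lemma fano_key_pt (a b : ℝ) (ha : 0 ≤ a) (hb : 0 ≤ b) (h : b = 0 → a = 0) :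
    a - b ≤ a * Real.log (a / b) := by
  rcases eq_or_lt_of_le hb with hb0 | hb0
  · rw [h hb0.symm, ← hb0]; simp
  rcases eq_or_lt_of_le ha with ha0 | ha0
  · simp [← ha0]; linarith
  have h1 : Real.log (b / a) ≤ b / a - 1 := Real.log_le_sub_one_of_pos (by positivity)
  have h2 : Real.log (a / b) = - Real.log (b / a) := by
    rw [← Real.log_inv]; congr 1; field_simp
  have h3 : a * (b / a - 1) = b - a := by field_simp
  have h4 : a * Real.log (b / a) ≤ b - a := by
    calc a * Real.log (b / a) ≤ a * (b / a - 1) := mul_le_mul_of_nonneg_left h1 ha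
      _ = b - a := h3
  rw [h2]; linarith

lemma fano_tlogt (t : ℝ) (ht : 0 ≤ t) :
    t - 1/2 - t * Real.log 2 ≤ t * Real.log t := by
  rcases eq_or_lt_of_le ht with h0 | h0
  · rw [← h0]; norm_num
  have h := fano_key_pt t (1/2) ht (by norm_num) (by norm_num)
  have he : Real.log (t / (1/2)) = Real.log 2 + Real.log t := by
    rw [div_div_eq_mul_div, div_one, Real.log_mul (ne_of_gt h0) (by norm_num)]
    ring
  rw [he] at h
  nlinarith

lemma fano_binent (t : ℝ) (h0 : 0 ≤ t) (h1 : t ≤ 1) :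
    -Real.log 2 ≤ t * Real.log t + (1 - t) * Real.log (1 - t) := by
  have a1 := fano_tlogt t h0
  have a2 := fano_tlogt (1 - t) (by linarith)
  nlinarith

/-- Discrete Fano step, abstract version. -/
lemma fano_discrete (r : ℕ) (hr : 3 ≤ r)
    (q : Fin r → Fin r → ℝ)
    (hq0 : ∀ i k, 0 ≤ q i k)
    (hqsum : ∀ i, ∑ k, q i k = 1) :
    Real.log (r:ℝ) - Real.log 2
        - (1 - (1/(r:ℝ)) * ∑ k, q k k) * Real.log ((r:ℝ) - 1)
      ≤ ∑ i, ∑ k, (1/(r:ℝ)) * (q i k *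
          Real.log (q i k / ((1/(r:ℝ)) * ∑ i', q i' k))) := by
  classical
  have hr3 : (3:ℝ) ≤ (r:ℝ) := by exact_mod_cast hr
  have hRpos : (0:ℝ) < (r:ℝ) := by linarith
  have hRne : ((r:ℝ)) ≠ 0 := ne_of_gt hRpos
  have hr1pos : (0:ℝ) < (r:ℝ) - 1 := by linarith
  set Qb : Fin r → ℝ := fun k => (1/(r:ℝ)) * ∑ i, q i k with hQbdef
  have hQb0 : ∀ k, 0 ≤ Qb k := fun k => by
    have : 0 ≤ ∑ i, q i k := Finset.sum_nonneg (fun i _ => hq0 i k)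
    positivity
  have hqleQb : ∀ i k, q i k ≤ (r:ℝ) * Qb k := by
    intro i k
    have h1 : q i k ≤ ∑ i', q i' k :=
      Finset.single_le_sum (fun i' _ => hq0 i' k) (mem_univ i)
    have h2 : (r:ℝ) * Qb k = ∑ i', q i' k := by rw [hQbdef]; field_simp
    linarith
  have hQbsum : ∑ k, Qb k = 1 := by
    rw [hQbdef, ← Finset.mul_sum, Finset.sum_comm]
    simp only [hqsum]
    simp [hRne]
  set t : ℝ := (1/(r:ℝ)) * ∑ k, q k k with htdef
  have ht0 : 0 ≤ t := by
    have : 0 ≤ ∑ k, q k k := Finset.sum_nonneg (fun k _ => hq0 k k)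
    positivity
  have hqle1 : ∀ i k, q i k ≤ 1 := by
    intro i k
    have := Finset.single_le_sum (fun k' _ => hq0 i k') (mem_univ k)
    rw [hqsum i] at this; exact this
  have ht1 : t ≤ 1 := by
    have h2 : ∑ k, q k k ≤ (r:ℝ) := by
      calc ∑ k, q k k ≤ ∑ _k : Fin r, (1:ℝ) :=
            Finset.sum_le_sum (fun k _ => hqle1 k k)
        _ = (r:ℝ) := by simp
    rw [htdef, div_mul_eq_mul_div, one_mul, div_le_one hRpos]
    linarith
  have hrow : ∀ i, ∑ k ∈ univ.erase i, q i k = 1 - q i i := by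
    intro i
    have := Finset.add_sum_erase univ (fun k => q i k) (mem_univ i)
    rw [hqsum i] at this
    linarith
  have h1mt : ∀ i k, i ≠ k → q i k ≤ (r:ℝ) * (1 - t) := by
    intro i k hik
    have e2 : (r:ℝ) * (1 - t) = ∑ i', (1 - q i' i') := by
      rw [htdef, Finset.sum_sub_distrib, Finset.sum_const, card_univ,
        Fintype.card_fin, nsmul_eq_mul, mul_one]
      field_simp
    rw [e2]
    calc q i k ≤ ∑ k' ∈ univ.erase i, q i k' :=
          Finset.single_le_sum (fun k' _ => hq0 i k')
            (Finset.mem_erase.2 ⟨Ne.symm hik, mem_univ k⟩)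
      _ = 1 - q i i := hrow i
      _ ≤ ∑ i', (1 - q i' i') :=
          Finset.single_le_sum (f := fun i' => 1 - q i' i')
            (fun i' _ => by show (0:ℝ) ≤ 1 - q i' i'; linarith [hqle1 i' i']) (mem_univ i)
  set c2 : ℝ := (1 - t)/((r:ℝ) - 1) with hc2def
  have hc20 : 0 ≤ c2 := div_nonneg (by linarith) (le_of_lt hr1pos)
  set u : Fin r → Fin r → ℝ := fun i k => if i = k then t else c2 with hudef
  have hu0 : ∀ i k, 0 ≤ u i k := by
    intro i k; rw [hudef]; dsimp only; split
    · exact ht0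
    · exact hc20
  -- per-term bound
  have hterm : ∀ i k,
      ((1/(r:ℝ)) * q i k - Qb k * u i k)
        + (Real.log (r:ℝ) * ((1/(r:ℝ)) * q i k)
            + (1/(r:ℝ)) * q i k * Real.log (u i k))
      ≤ (1/(r:ℝ)) * (q i k * Real.log (q i k / Qb k)) := by
    intro i k
    rcases eq_or_lt_of_le (hq0 i k) with hq | hq
    · rw [← hq]
      simp only [mul_zero, zero_mul, zero_sub, mul_zero, zero_add, add_zero]
      have := mul_nonneg (hQb0 k) (hu0 i k)
      linarith
    · have hQbpos : 0 < Qb k := by nlinarith [hqleQb i k]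
      have hupos : 0 < u i k := by
        rw [hudef]; dsimp only; split
        · rename_i hik
          subst hik
          have h1 : q i i ≤ ∑ k', q k' k' :=
            Finset.single_le_sum (fun k' _ => hq0 k' k') (mem_univ i)
          have : 0 < ∑ k', q k' k' := lt_of_lt_of_le hq h1
          rw [htdef]; positivity
        · rename_i hik
          have := h1mt i k hik
          rw [hc2def]
          have h1t : 0 < 1 - t := by nlinarith
          positivity
      have hm : (0:ℝ) < (1/(r:ℝ)) * q i k := by positivity
      have hb : (0:ℝ) < Qb k * u i k := mul_pos hQbpos hupos
      have key := fano_key_pt ((1/(r:ℝ)) * q i k) (Qb k * u i k)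
        (le_of_lt hm) (le_of_lt hb) (fun h => absurd h (ne_of_gt hb))
      have hlog : Real.log (q i k / Qb k)
          = Real.log ((1/(r:ℝ)) * q i k / (Qb k * u i k))
            + Real.log (r:ℝ) + Real.log (u i k) := by
        rw [Real.log_div (ne_of_gt hq) (ne_of_gt hQbpos),
          Real.log_div (ne_of_gt hm) (ne_of_gt hb),
          Real.log_mul (ne_of_gt hQbpos) (ne_of_gt hupos),
          Real.log_mul (one_div_ne_zero hRne) (ne_of_gt hq),
          Real.log_div (by norm_num) hRne, Real.log_one]
        ring
      have expand : (1/(r:ℝ)) * (q i k * Real.log (q i k / Qb k))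
          = (1/(r:ℝ)) * q i k * Real.log ((1/(r:ℝ)) * q i k / (Qb k * u i k))
            + (Real.log (r:ℝ) * ((1/(r:ℝ)) * q i k)
                + (1/(r:ℝ)) * q i k * Real.log (u i k)) := by
        rw [hlog]; ring
      rw [expand]
      linarith
  -- sum everything
  have hmsum : ∑ i : Fin r, ∑ k, (1/(r:ℝ)) * q i k = 1 := by
    simp only [← Finset.mul_sum, hqsum]
    simp [hRne]
  have hbsum : ∑ i : Fin r, ∑ k, Qb k * u i k = 1 := by
    rw [Finset.sum_comm]
    have husum : ∀ k, ∑ i, u i k = 1 := by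
      intro k
      simp only [hudef]
      rw [← Finset.add_sum_erase univ _ (mem_univ k)]
      have e1 : ∀ i ∈ univ.erase k, (if i = k then t else c2) = c2 := by
        intro i hi
        rw [if_neg (Finset.mem_erase.1 hi).1]
      rw [Finset.sum_congr rfl e1, Finset.sum_const, Finset.card_erase_of_mem (mem_univ k),
        card_univ, Fintype.card_fin, if_pos rfl, nsmul_eq_mul, hc2def]
      have : ((r - 1 : ℕ) : ℝ) = (r:ℝ) - 1 := by
        have : (1:ℕ) ≤ r := by omega
        push_cast [this]; ring
      rw [this]
      field_simp
      ring
    calc ∑ k : Fin r, ∑ i, Qb k * u i k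
        = ∑ k : Fin r, Qb k * ∑ i, u i k := by
          simp only [← Finset.mul_sum]
      _ = ∑ k : Fin r, Qb k := by simp only [husum, mul_one]
      _ = 1 := hQbsum
  have hmlogu : ∑ i : Fin r, ∑ k, (1/(r:ℝ)) * q i k * Real.log (u i k)
      = t * Real.log t + (1 - t) * Real.log c2 := by
    have e3 : ∀ i, ∑ k, (1/(r:ℝ)) * q i k * Real.log (u i k)
        = Real.log t * ((1/(r:ℝ)) * q i i)
          + Real.log c2 * ((1/(r:ℝ)) * (1 - q i i)) := by
      intro i
      rw [← Finset.add_sum_erase univ _ (mem_univ i)]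
      have e1 : ∀ k ∈ univ.erase i,
          (1/(r:ℝ)) * q i k * Real.log (u i k)
            = Real.log c2 * ((1/(r:ℝ)) * q i k) := by
        intro k hk
        rw [hudef]; dsimp only
        rw [if_neg (fun h => (Finset.mem_erase.1 hk).1 h.symm)]
        ring
      rw [Finset.sum_congr rfl e1, ← Finset.mul_sum, ← Finset.mul_sum, hrow i]
      rw [hudef]; dsimp only
      rw [if_pos rfl]
      ring
    simp only [e3]
    rw [Finset.sum_add_distrib, ← Finset.mul_sum, ← Finset.mul_sum,
      ← Finset.mul_sum, ← Finset.mul_sum]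
    rw [Finset.sum_sub_distrib, Finset.sum_const, card_univ, Fintype.card_fin,
      nsmul_eq_mul, mul_one]
    rw [← htdef]
    have : (1/(r:ℝ)) * ((r:ℝ) - ∑ i, q i i) = 1 - t := by
      rw [htdef]; field_simp
    rw [this]
    ring
  have hsum_total :
      (1 - 1) + (Real.log (r:ℝ) * 1 + (t * Real.log t + (1 - t) * Real.log c2))
      ≤ ∑ i, ∑ k, (1/(r:ℝ)) * (q i k * Real.log (q i k / Qb k)) := by
    have h := Finset.sum_le_sum (fun i (_ : i ∈ univ) =>
      Finset.sum_le_sum (fun k (_ : k ∈ univ) => hterm i k))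
    have e : ∑ i : Fin r, ∑ k, (((1/(r:ℝ)) * q i k - Qb k * u i k)
            + (Real.log (r:ℝ) * ((1/(r:ℝ)) * q i k)
              + (1/(r:ℝ)) * q i k * Real.log (u i k)))
        = (∑ i : Fin r, ∑ k, (1/(r:ℝ)) * q i k)
          - (∑ i : Fin r, ∑ k, Qb k * u i k)
          + (Real.log (r:ℝ) * (∑ i : Fin r, ∑ k, (1/(r:ℝ)) * q i k)
            + ∑ i : Fin r, ∑ k, (1/(r:ℝ)) * q i k * Real.log (u i k)) := by
      simp only [Finset.sum_add_distrib, Finset.sum_sub_distrib, ← Finset.mul_sum]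
    rw [hmsum, hbsum, hmlogu] at e
    calc (1 - 1) + (Real.log (r:ℝ) * 1 + (t * Real.log t + (1 - t) * Real.log c2))
        = ∑ i : Fin r, ∑ k, (((1/(r:ℝ)) * q i k - Qb k * u i k)
            + (Real.log (r:ℝ) * ((1/(r:ℝ)) * q i k)
              + (1/(r:ℝ)) * q i k * Real.log (u i k))) := by rw [e]
      _ ≤ _ := h
  have hlogc2 : (1 - t) * Real.log c2
      = (1 - t) * Real.log (1 - t) - (1 - t) * Real.log ((r:ℝ) - 1) := by
    rcases eq_or_lt_of_le ht1 with h1 | h1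
    · rw [← h1]; simp
    · rw [hc2def, Real.log_div (by linarith) (ne_of_gt hr1pos)]
      ring
  have hbin := fano_binent t ht0 ht1
  rw [hlogc2] at hsum_total
  calc Real.log (r:ℝ) - Real.log 2 - (1 - t) * Real.log ((r:ℝ) - 1)
      ≤ (1 - 1) + (Real.log (r:ℝ) * 1 + (t * Real.log t
          + ((1 - t) * Real.log (1 - t) - (1 - t) * Real.log ((r:ℝ) - 1)))) := by
        linarith
    _ ≤ _ := hsum_total

/-- Fano-type lower bound with averaged KL divergences: with `r ≥ 3` hypotheses,
uniform prior `1/r`, and conditional densities `p i` with respect to `μ` (pairwise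
absolutely continuous with integrable log-likelihood ratios, so the KL divergences
are well defined), every measurable estimator `est : Y → Fin r` has probability of
error at least
`(1/log(r−1)) · (log r − (1/r²) ∑_{i,j} D_KL(p(·|i) ‖ p(·|j)) − log 2)`. -/
theorem fano_lower_bound
    {Y : Type*} [MeasurableSpace Y] (μ : Measure Y) [SigmaFinite μ]
    (r : ℕ) (hr : 3 ≤ r)
    (p : Fin r → Y → ℝ)
    (hp_meas : ∀ i, Measurable (p i))
    (hp_nonneg : ∀ i y, 0 ≤ p i y)
    (hp_int : ∀ i, Integrable (p i) μ)
    (hp_one : ∀ i, ∫ y, p i y ∂μ = 1)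
    (hac : ∀ i j, ∀ᵐ y ∂μ, p j y = 0 → p i y = 0)
    (hkl_int : ∀ i j, Integrable (fun y => p i y * Real.log (p i y / p j y)) μ)
    (est : Y → Fin r) (hest_meas : Measurable est) :
    (1 / Real.log ((r : ℝ) - 1)) *
        (Real.log (r : ℝ)
          - (1 / (r : ℝ) ^ 2) *
              ∑ i, ∑ j, ∫ y, p i y * Real.log (p i y / p j y) ∂μ
          - Real.log 2)
      ≤ ∑ i, (1 / (r : ℝ)) * ∫ y in {y | est y ≠ i}, p i y ∂μ := by
  classical
  have hr3 : (3:ℝ) ≤ (r:ℝ) := by exact_mod_cast hr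
  have hRpos : (0:ℝ) < (r:ℝ) := by linarith
  have hRne : ((r:ℝ)) ≠ 0 := ne_of_gt hRpos
  have hL : 0 < Real.log ((r:ℝ) - 1) := Real.log_pos (by linarith)
  have hr1pos : (0:ℝ) < (r:ℝ) - 1 := by linarith
  -- partition sets
  set A : Fin r → Set Y := fun k => est ⁻¹' {k} with hAdef
  have hA : ∀ k, MeasurableSet (A k) := fun k => hest_meas (measurableSet_singleton k)
  set q : Fin r → Fin r → ℝ := fun i k => ∫ y in A k, p i y ∂μ with hqdef
  have hq0 : ∀ i k, 0 ≤ q i k := fun i k =>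
    setIntegral_nonneg (hA k) (fun y _ => hp_nonneg i y)
  have hdisj : Set.Pairwise (↑(univ : Finset (Fin r)) : Set (Fin r)) (Function.onFun Disjoint A) := by
    intro a _ b _ hab
    simp only [Function.onFun, hAdef]
    refine Set.disjoint_left.2 ?_
    rintro y hy hy2
    simp only [Set.mem_preimage, Set.mem_singleton_iff] at hy hy2
    exact hab (hy ▸ hy2 ▸ rfl)
  have hUnion : (⋃ k ∈ (univ : Finset (Fin r)), A k) = Set.univ := by
    ext y; simp [hAdef]
  have hpart : ∀ f : Y → ℝ, Integrable f μ →
      ∑ k, ∫ y in A k, f y ∂μ = ∫ y, f y ∂μ := by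
    intro f hf
    rw [← integral_biUnion_finset univ (fun k _ => hA k) hdisj
      (fun k _ => hf.integrableOn), hUnion, setIntegral_univ]
  have hqsum : ∀ i, ∑ k, q i k = 1 := fun i => by
    rw [hqdef]; rw [hpart (p i) (hp_int i), hp_one i]
  -- average density
  set pbar : Y → ℝ := fun y => (1/(r:ℝ)) * ∑ j, p j y with hpbardef
  have hpbar_int : Integrable pbar μ :=
    (integrable_finset_sum univ (fun j _ => hp_int j)).const_mul _
  have hpbar_nonneg : ∀ y, 0 ≤ pbar y := fun y => by
    have : 0 ≤ ∑ j, p j y := Finset.sum_nonneg (fun j _ => hp_nonneg j y)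
    positivity
  set Qb : Fin r → ℝ := fun k => (1/(r:ℝ)) * ∑ i, q i k with hQbdef
  have hQb0 : ∀ k, 0 ≤ Qb k := fun k => by
    have : 0 ≤ ∑ i, q i k := Finset.sum_nonneg (fun i _ => hq0 i k)
    positivity
  have hQbint : ∀ k, ∫ y in A k, pbar y ∂μ = Qb k := by
    intro k
    rw [hpbardef, hQbdef]
    simp only
    rw [integral_const_mul]
    congr 1
    rw [integral_finset_sum univ (fun j _ => (hp_int j).integrableOn)]
  have hqleQb : ∀ i k, q i k ≤ (r:ℝ) * Qb k := by
    intro i k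
    have h1 : q i k ≤ ∑ i', q i' k :=
      Finset.single_le_sum (fun i' _ => hq0 i' k) (mem_univ i)
    have : (r:ℝ) * Qb k = ∑ i', q i' k := by
      rw [hQbdef]; field_simp
    linarith
  have hQbsum : ∑ k, Qb k = 1 := by
    rw [hQbdef]
    rw [← Finset.mul_sum, Finset.sum_comm]
    simp only [hqsum]
    simp [hRne]
  -- a.e. support agreement
  have hG : ∀ᵐ y ∂μ, ∀ i j : Fin r, p j y = 0 → p i y = 0 := by
    rw [ae_all_iff]; intro i; rw [ae_all_iff]; intro j; exact hac i j
  -- Step A+B : data processing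
  have hAB : ∀ i, ∑ k, q i k * Real.log (q i k / Qb k)
      ≤ (1/(r:ℝ)) * ∑ j, ∫ y, p i y * Real.log (p i y / p j y) ∂μ := by
    intro i
    have hterm : ∀ k, q i k * Real.log (q i k / Qb k)
        ≤ ∑ j, (1/(r:ℝ)) * ∫ y in A k, p i y * Real.log (p i y / p j y) ∂μ := by
      intro k
      rcases eq_or_lt_of_le (hq0 i k) with hq | hq
      · -- q i k = 0 : p i vanishes a.e. on A k
        have hq' : ∫ y in A k, p i y ∂μ = 0 := by
          have : q i k = 0 := hq.symm
          simpa [hqdef] using this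
        have hz : (fun y => p i y) =ᵐ[μ.restrict (A k)] 0 := by
          rw [← integral_eq_zero_iff_of_nonneg_ae
            (ae_of_all _ (fun y => hp_nonneg i y)) ((hp_int i).restrict)]
          exact hq'
        have hz2 : ∀ j, ∫ y in A k, p i y * Real.log (p i y / p j y) ∂μ = 0 := by
          intro j
          have hz3 : (fun y => p i y * Real.log (p i y / p j y))
              =ᵐ[μ.restrict (A k)] 0 := by
            filter_upwards [hz] with y hy
            simp only [Pi.zero_apply] at hy ⊢
            rw [hy]; ring
          rw [integral_congr_ae hz3]
          simp
        rw [← hq]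
        simp [hz2]
      · have hQbpos : 0 < Qb k := by nlinarith [hqleQb i k]
        set c : ℝ := q i k / Qb k with hcdef
        have hc : 0 < c := div_pos hq hQbpos
        -- pointwise a.e. inequality
        have hpt : ∀ᵐ y ∂(μ.restrict (A k)),
            (Real.log c + 1) * p i y - c * pbar y
              ≤ ∑ j, (1/(r:ℝ)) * (p i y * Real.log (p i y / p j y)) := by
          refine ae_restrict_of_ae (hG.mono ?_)
          intro y hy
          by_cases hpi : p i y = 0
          · have hsum0 : ∀ j, p i y * Real.log (p i y / p j y) = 0 := fun j => by
              rw [hpi]; ring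
            simp only [hpi, zero_mul, mul_zero, Finset.sum_const_zero]
            nlinarith [hpbar_nonneg y, hc]
          · have hpi' : 0 < p i y := lt_of_le_of_ne (hp_nonneg i y) (Ne.symm hpi)
            have hall : ∀ j, 0 < p j y := fun j =>
              lt_of_le_of_ne (hp_nonneg j y) (fun h => hpi (hy i j h.symm))
            have hsumpos : 0 < ∑ j, p j y :=
              Finset.sum_pos (fun j _ => hall j) ⟨i, mem_univ i⟩
            have hpb : 0 < pbar y := by
              rw [hpbardef]; exact mul_pos (by positivity) hsumpos
            have k4 : ∑ j, Real.log (p j y / pbar y) ≤ 0 := by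
              have h5 : ∀ j, Real.log (p j y / pbar y) ≤ p j y / pbar y - 1 := fun j =>
                Real.log_le_sub_one_of_pos (div_pos (hall j) hpb)
              have h6 : ∑ j, (p j y / pbar y - 1) = 0 := by
                rw [Finset.sum_sub_distrib, Finset.sum_const, card_univ,
                  Fintype.card_fin, nsmul_eq_mul, mul_one, ← Finset.sum_div]
                rw [hpbardef]
                field_simp
                ring
              calc ∑ j, Real.log (p j y / pbar y)
                  ≤ ∑ j, (p j y / pbar y - 1) := Finset.sum_le_sum (fun j _ => h5 j)
                _ = 0 := h6
            have e2 : Real.log (p i y / pbar y)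
                = Real.log (p i y) - Real.log (pbar y) :=
              Real.log_div hpi (ne_of_gt hpb)
            have e3 : ∑ j, Real.log (p j y / pbar y)
                = (∑ j, Real.log (p j y)) - (r:ℝ) * Real.log (pbar y) := by
              have h7 : ∀ j, Real.log (p j y / pbar y)
                  = Real.log (p j y) - Real.log (pbar y) := fun j =>
                Real.log_div (ne_of_gt (hall j)) (ne_of_gt hpb)
              simp only [h7]
              rw [Finset.sum_sub_distrib, Finset.sum_const, card_univ,
                Fintype.card_fin, nsmul_eq_mul]
            have k3 : Real.log (p i y / pbar y)
                ≤ (1/(r:ℝ)) * ∑ j, Real.log (p i y / p j y) := by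
              have e4 : ∑ j, Real.log (p i y / p j y)
                  = (r:ℝ) * Real.log (p i y) - ∑ j, Real.log (p j y) := by
                have h8 : ∀ j, Real.log (p i y / p j y)
                    = Real.log (p i y) - Real.log (p j y) := fun j =>
                  Real.log_div hpi (ne_of_gt (hall j))
                simp only [h8]
                rw [Finset.sum_sub_distrib, Finset.sum_const, card_univ,
                  Fintype.card_fin, nsmul_eq_mul]
              rw [e2, e4]
              rw [e3] at k4
              have hinv : (1/(r:ℝ)) * ((r:ℝ) * Real.log (p i y)
                  - ∑ j, Real.log (p j y))
                  = Real.log (p i y) - (1/(r:ℝ)) * ∑ j, Real.log (p j y) := by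
                field_simp
              rw [hinv]
              have h9 : (1/(r:ℝ)) * (∑ j, Real.log (p j y)) ≤ Real.log (pbar y) := by
                have h10 : (∑ j, Real.log (p j y)) ≤ (r:ℝ) * Real.log (pbar y) := by
                  linarith
                have h11 := mul_le_mul_of_nonneg_left h10
                  (le_of_lt (show (0:ℝ) < 1/(r:ℝ) by positivity))
                have h12 : (1/(r:ℝ)) * ((r:ℝ) * Real.log (pbar y))
                    = Real.log (pbar y) := by field_simp
                linarith
              linarith
            have k1 := fano_key_pt (p i y) (c * pbar y) (hp_nonneg i y)
              (le_of_lt (mul_pos hc hpb))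
              (fun h => absurd h (ne_of_gt (mul_pos hc hpb)))
            have k2 : Real.log (p i y / (c * pbar y))
                = Real.log (p i y / pbar y) - Real.log c := by
              rw [Real.log_div hpi (ne_of_gt (mul_pos hc hpb)),
                Real.log_mul (ne_of_gt hc) (ne_of_gt hpb),
                Real.log_div hpi (ne_of_gt hpb)]
              ring
            rw [k2] at k1
            have k6 : ∑ j, (1/(r:ℝ)) * (p i y * Real.log (p i y / p j y))
                = p i y * ((1/(r:ℝ)) * ∑ j, Real.log (p i y / p j y)) := by
              rw [← Finset.mul_sum, ← Finset.mul_sum]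
              ring
            rw [k6]
            have k7 := mul_le_mul_of_nonneg_left k3 (hp_nonneg i y)
            nlinarith [k1, k7]
        -- integrate the pointwise inequality over A k
        have hIL : Integrable (fun y => (Real.log c + 1) * p i y - c * pbar y)
            (μ.restrict (A k)) :=
          (((hp_int i).restrict).const_mul _).sub ((hpbar_int.restrict).const_mul c)
        have hIR : Integrable
            (fun y => ∑ j, (1/(r:ℝ)) * (p i y * Real.log (p i y / p j y)))
            (μ.restrict (A k)) :=
          integrable_finset_sum _ (fun j _ => ((hkl_int i j).restrict).const_mul _)
        have hint := integral_mono_ae hIL hIR hpt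
        have hLcalc : ∫ y in A k, ((Real.log c + 1) * p i y - c * pbar y) ∂μ
            = q i k * Real.log c := by
          rw [integral_sub (((hp_int i).restrict).const_mul _)
            ((hpbar_int.restrict).const_mul c),
            integral_const_mul, integral_const_mul, hQbint k]
          have : (∫ y in A k, p i y ∂μ) = q i k := by rw [hqdef]
          rw [this]
          have hcQ : c * Qb k = q i k := by
            rw [hcdef]; field_simp
          rw [hcQ]; ring
        have hRcalc : ∫ y in A k,
            (∑ j, (1/(r:ℝ)) * (p i y * Real.log (p i y / p j y))) ∂μ
            = ∑ j, (1/(r:ℝ)) * ∫ y in A k, p i y * Real.log (p i y / p j y) ∂μ := by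
          rw [integral_finset_sum _ (fun j _ => ((hkl_int i j).restrict).const_mul _)]
          congr 1
          ext j
          rw [integral_const_mul]
        rw [hLcalc, hRcalc] at hint
        have hlogc : Real.log (q i k / Qb k) = Real.log c := by rw [hcdef]
        rw [hlogc]
        linarith [hint]
    calc ∑ k, q i k * Real.log (q i k / Qb k)
        ≤ ∑ k, ∑ j, (1/(r:ℝ)) * ∫ y in A k, p i y * Real.log (p i y / p j y) ∂μ :=
          Finset.sum_le_sum (fun k _ => hterm k)
      _ = ∑ j, (1/(r:ℝ)) * ∑ k, ∫ y in A k, p i y * Real.log (p i y / p j y) ∂μ := by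
          rw [Finset.sum_comm]
          congr 1; ext j
          rw [← Finset.mul_sum]
      _ = (1/(r:ℝ)) * ∑ j, ∫ y, p i y * Real.log (p i y / p j y) ∂μ := by
          rw [← Finset.mul_sum]
          congr 1
          exact Finset.sum_congr rfl (fun j _ => hpart _ (hkl_int i j))
  -- Step C : discrete Fano
  set t : ℝ := (1/(r:ℝ)) * ∑ k, q k k with htdef
  have ht0 : 0 ≤ t := by
    have : 0 ≤ ∑ k, q k k := Finset.sum_nonneg (fun k _ => hq0 k k)
    positivity
  have ht1 : t ≤ 1 := by
    have h1 : ∀ k, q k k ≤ 1 := by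
      intro k
      have := Finset.single_le_sum (fun k' _ => hq0 k k') (mem_univ k)
      rw [hqsum k] at this; exact this
    have h2 : ∑ k, q k k ≤ (r:ℝ) := by
      calc ∑ k, q k k ≤ ∑ _k : Fin r, (1:ℝ) := Finset.sum_le_sum (fun k _ => h1 k)
        _ = (r:ℝ) := by simp
    rw [htdef]
    rw [div_mul_eq_mul_div, one_mul, div_le_one hRpos]
    linarith [h2]
  have hC : Real.log (r:ℝ) - Real.log 2 - (1 - t) * Real.log ((r:ℝ) - 1)
      ≤ ∑ i, ∑ k, (1/(r:ℝ)) * (q i k * Real.log (q i k / Qb k)) := by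
    have := fano_discrete r hr q hq0 hqsum
    rw [htdef, hQbdef]
    exact this
  -- error probability
  have hPE : ∀ i, ∫ y in {y | est y ≠ i}, p i y ∂μ = 1 - q i i := by
    intro i
    have hset : {y | est y ≠ i} = (A i)ᶜ := by
      ext y; simp [hAdef]
    rw [hset]
    have := integral_add_compl (hA i) (hp_int i)
    rw [hp_one i] at this
    rw [hqdef] at *
    linarith [this]
  have hPEsum : ∑ i, (1/(r:ℝ)) * ∫ y in {y | est y ≠ i}, p i y ∂μ = 1 - t := by
    simp only [hPE]
    rw [htdef, Finset.mul_sum]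
    have h1 : ∀ x : Fin r, (1/(r:ℝ)) * (1 - q x x) = (1/(r:ℝ)) - (1/(r:ℝ)) * q x x := by
      intro x; ring
    simp only [h1]
    rw [Finset.sum_sub_distrib, Finset.sum_const, card_univ, Fintype.card_fin,
      nsmul_eq_mul]
    field_simp
  -- assemble
  rw [hPEsum]
  have hI : ∑ i, ∑ k, (1/(r:ℝ)) * (q i k * Real.log (q i k / Qb k))
      ≤ (1/(r:ℝ)^2) * ∑ i, ∑ j, ∫ y, p i y * Real.log (p i y / p j y) ∂μ := by
    have step : ∀ i, ∑ k, (1/(r:ℝ)) * (q i k * Real.log (q i k / Qb k))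
        ≤ (1/(r:ℝ)^2) * ∑ j, ∫ y, p i y * Real.log (p i y / p j y) ∂μ := by
      intro i
      have h1 : ∑ k, (1/(r:ℝ)) * (q i k * Real.log (q i k / Qb k))
          = (1/(r:ℝ)) * ∑ k, q i k * Real.log (q i k / Qb k) :=
        (Finset.mul_sum _ _ _).symm
      rw [h1]
      have h2 := mul_le_mul_of_nonneg_left (hAB i)
        (le_of_lt (show (0:ℝ) < 1/(r:ℝ) by positivity))
      calc (1/(r:ℝ)) * ∑ k, q i k * Real.log (q i k / Qb k)
          ≤ (1/(r:ℝ)) * ((1/(r:ℝ)) * ∑ j, ∫ y, p i y * Real.log (p i y / p j y) ∂μ) := h2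
        _ = (1/(r:ℝ)^2) * ∑ j, ∫ y, p i y * Real.log (p i y / p j y) ∂μ := by
            ring
    calc ∑ i, ∑ k, (1/(r:ℝ)) * (q i k * Real.log (q i k / Qb k))
        ≤ ∑ i, (1/(r:ℝ)^2) * ∑ j, ∫ y, p i y * Real.log (p i y / p j y) ∂μ :=
          Finset.sum_le_sum (fun i _ => step i)
      _ = (1/(r:ℝ)^2) * ∑ i, ∑ j, ∫ y, p i y * Real.log (p i y / p j y) ∂μ :=
          (Finset.mul_sum _ _ _).symm
  have hX : Real.log (r:ℝ)
      - (1/(r:ℝ)^2) * ∑ i, ∑ j, ∫ y, p i y * Real.log (p i y / p j y) ∂μ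
      - Real.log 2 ≤ (1 - t) * Real.log ((r:ℝ) - 1) := by
    linarith [le_trans hC hI]
  rw [one_div_mul_eq_div]
  rw [div_le_iff₀ hL]
  linarith [hX]
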